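/- Let H be a connected k-uniform hypergraph with a positive Perron eigenvector for ρ(A_H). Then ρ(A_H) ≤ max_{{i1,…,ik} ∈ E(H)} (d_{i1} d_{i2} ⋯ d_{ik})^{1/k}, i.e., the spectral radius is at most the maximum geometric mean of the degrees over an edge. -/

import Mathlib

open Finset

/-- The multiset of entries of an index tuple. -/
def idxMultiset {n k : ℕ} (idx : Fin k → Fin n) : Multiset (Fin n) := ↑(List.ofFn idx)

/-- Entries of the adjacency tensor of a general hypergraph with edge set `E` and rank `k`:
`1/(k-1)!` on tuples that are permutations of an edge of size `k`;
`(k-s+1)!/k!` on tuples whose multiset is an edge of size `s < k` with one of its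
vertices repeated `k-s+1` times; `0` otherwise. -/
noncomputable def adjEntry {R : Type*} [Field R] {n : ℕ} (k : ℕ)
    (E : Finset (Finset (Fin n))) (idx : Fin k → Fin n) : R :=
  ∑ e ∈ E,
    if e.card = k ∧ idxMultiset idx = e.val then 1 / (Nat.factorial (k - 1) : R)
    else if e.card < k ∧ ∃ j ∈ e, idxMultiset idx = e.val + Multiset.replicate (k - e.card) j then
      (Nat.factorial (k - e.card + 1) : R) / (Nat.factorial k : R)
    else 0

/-- Full contraction `A x^k = ∑ a_{i₁…i_k} x_{i₁} ⋯ x_{i_k}`. -/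
noncomputable def tFull {R : Type*} [CommRing R] {n : ℕ} (k : ℕ)
    (A : (Fin k → Fin n) → R) (x : Fin n → R) : R :=
  ∑ idx : Fin k → Fin n, A idx * ∏ j, x (idx j)

/-- `(A x^{k-1})_i = ∑_{i₂,…,i_k} a_{i i₂ … i_k} x_{i₂} ⋯ x_{i_k}`. -/
noncomputable def tApply {R : Type*} [CommRing R] {n : ℕ} (k : ℕ) [NeZero k]
    (A : (Fin k → Fin n) → R) (x : Fin n → R) (i : Fin n) : R :=
  ∑ idx : Fin k → Fin n,
    if idx 0 = i then A idx * ∏ j ∈ Finset.univ.erase 0, x (idx j) else 0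

/-- Degree of a vertex: the number of edges containing it. -/
def deg {n : ℕ} (E : Finset (Finset (Fin n))) (i : Fin n) : ℕ :=
  (E.filter (fun e => i ∈ e)).card

/-- `E` has rank `k`: all edges have size at most `k` and some edge has size `k`. -/
def HasRank {n : ℕ} (E : Finset (Finset (Fin n))) (k : ℕ) : Prop :=
  (∀ e ∈ E, e.card ≤ k) ∧ ∃ e ∈ E, e.card = k

/-- Connectedness of a hypergraph: any two vertices are joined by a sequence of
vertices consecutively sharing an edge. -/
def Conn {n : ℕ} (E : Finset (Finset (Fin n))) : Prop :=
  ∀ u v : Fin n, Relation.ReflTransGen (fun a b => ∃ e ∈ E, a ∈ e ∧ b ∈ e) u v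

/-- The spectral radius of a symmetric nonnegative tensor, via the variational
characterization `ρ(A) = max { x^T (A x^{k-1}) : x ≥ 0, ∑ xᵢ^k = 1 }`. -/
noncomputable def specRad {n : ℕ} (k : ℕ) (A : (Fin k → Fin n) → ℝ) : ℝ :=
  sSup {r : ℝ | ∃ x : Fin n → ℝ, (∀ i, 0 ≤ x i) ∧ ∑ i, x i ^ k = 1 ∧ r = tFull k A x}

lemma mem_of_idxMultiset {n m : ℕ} {idx : Fin m → Fin n} {f : Finset (Fin n)}
    (h : idxMultiset idx = f.val) (j : Fin m) : idx j ∈ f := by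
  have : idx j ∈ idxMultiset idx := by
    simp [idxMultiset, List.mem_ofFn]
  rw [h] at this
  exact this

lemma inj_of_idxMultiset {n m : ℕ} {idx : Fin m → Fin n} {f : Finset (Fin n)}
    (h : idxMultiset idx = f.val) : Function.Injective idx := by
  rw [← List.nodup_ofFn (f := idx), ← Multiset.coe_nodup]
  rw [show ((List.ofFn idx : List (Fin n)) : Multiset (Fin n)) = idxMultiset idx from rfl, h]
  exact f.nodup

lemma countPerms {n m : ℕ} (f : Finset (Fin n)) (hf : f.card = m) :
    (Finset.univ.filter (fun idx : Fin m → Fin n => idxMultiset idx = f.val)).card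
      = m.factorial := by
  classical
  rw [← Fintype.card_subtype]
  have hcard : Fintype.card (Fin m) = Fintype.card ↥f := by simp [hf]
  set P : (Fin m → Fin n) → Prop := fun idx => idxMultiset idx = f.val with hP
  have hbij : ∀ p : {idx // P idx}, Function.Bijective
      (fun j : Fin m => (⟨p.1 j, mem_of_idxMultiset p.2 j⟩ : ↥f)) := by
    intro p
    rw [Fintype.bijective_iff_injective_and_card]
    refine ⟨fun a b hab => inj_of_idxMultiset p.2 (congrArg Subtype.val hab), hcard⟩
  let Ψ : {idx // P idx} → (Fin m ≃ ↥f) := fun p => Equiv.ofBijective _ (hbij p)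
  have hΨbij : Function.Bijective Ψ := by
    constructor
    · intro p q hpq
      apply Subtype.ext; funext j
      have := congrArg (fun σ => (σ j : Fin n)) (congrArg Equiv.toFun hpq)
      exact this
    · intro σ
      have hprop : P (fun j => (σ j : Fin n)) := by
        have hnd : (List.ofFn (fun j => (σ j : Fin n))).Nodup :=
          List.nodup_ofFn.mpr (Subtype.val_injective.comp σ.injective)
        show ((List.ofFn fun j => ((σ j : Fin n))) : Multiset (Fin n)) = f.val
        refine Multiset.eq_of_le_of_card_le ?_ ?_
        · rw [← Multiset.coe_nodup] at hnd
          rw [Multiset.le_iff_subset hnd]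
          intro a ha
          simp [idxMultiset, List.mem_ofFn] at ha
          obtain ⟨j, rfl⟩ := ha
          exact (σ j).2
        · simp [hf]

      refine ⟨⟨fun j => (σ j : Fin n), hprop⟩, ?_⟩
      apply Equiv.ext; intro j
      exact Subtype.ext rfl
  rw [Fintype.card_of_bijective hΨbij, Fintype.card_equiv (Fintype.equivOfCardEq hcard),
    Fintype.card_fin]

lemma Tcount {n m : ℕ} (e : Finset (Fin n)) (he : e.card = m + 1) (i : Fin n) (hi : i ∈ e) :
    (Finset.univ.filter (fun idx : Fin (m+1) → Fin n =>
      idx 0 = i ∧ idxMultiset idx = e.val)).card = m.factorial := by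
  classical
  have hcons : ∀ y : Fin m → Fin n, idxMultiset (Fin.cons i y) = i ::ₘ idxMultiset y := by
    intro y
    show ((List.ofFn (Fin.cons i y)) : Multiset (Fin n)) = _
    rw [List.ofFn_succ]
    simp [idxMultiset]
  have hie : i ::ₘ (e.erase i).val = e.val := by
    rw [Finset.erase_val]
    exact Multiset.cons_erase hi
  have hsucc : ∀ idx : Fin (m+1) → Fin n, idx 0 = i →
      idxMultiset idx = i ::ₘ idxMultiset (idx ∘ Fin.succ) := by
    intro idx h0
    show ((List.ofFn idx) : Multiset (Fin n)) = _
    rw [List.ofFn_succ, h0]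
    simp [idxMultiset]
    rfl
  rw [← countPerms (e.erase i) (by rw [Finset.card_erase_of_mem hi, he]; rfl)]
  apply Finset.card_nbij' (fun idx => idx ∘ Fin.succ) (fun y => Fin.cons i y)
  · intro idx hidx
    simp only [Finset.mem_coe, Finset.mem_filter, Finset.mem_univ, true_and] at hidx ⊢
    obtain ⟨h0, hM⟩ := hidx
    have := hsucc idx h0
    rw [hM, ← hie] at this
    exact ((Multiset.cons_inj_right i).mp this).symm
  · intro y hy
    simp only [Finset.mem_coe, Finset.mem_filter, Finset.mem_univ, true_and] at hy ⊢
    exact ⟨by simp, by rw [hcons, hy, hie]⟩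
  · intro idx hidx
    simp only [Finset.mem_coe, Finset.mem_filter, Finset.mem_univ, true_and] at hidx
    rw [← hidx.1]
    exact Fin.cons_self_tail idx
  · intro y hy
    funext j
    simp [Fin.cons_succ]

lemma prod_eq_of_idxMultiset {n m : ℕ} {idx : Fin m → Fin n} {e : Finset (Fin n)}
    (hM : idxMultiset idx = e.val) (x : Fin n → ℝ) :
    ∏ j, x (idx j) = ∏ v ∈ e, x v := by
  have h1 : ∏ j, x (idx j) = (Multiset.map x (idxMultiset idx)).prod := by
    show _ = (Multiset.map x ↑(List.ofFn idx)).prod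
    rw [Multiset.map_coe, List.map_ofFn, Multiset.prod_coe, List.prod_ofFn]
    rfl
  rw [h1, hM]
  exact (Finset.prod_eq_multiset_prod e x).symm

lemma lemA {n m : ℕ} (E : Finset (Finset (Fin n)))
    (hcard : ∀ e ∈ E, e.card = m + 1)
    (x : Fin n → ℝ) (i : Fin n) :
    x i * tApply (m+1) (adjEntry (m+1) E) x i
      = ∑ e ∈ E.filter (fun e => i ∈ e), ∏ v ∈ e, x v := by
  classical
  have key : ∀ idx : Fin (m+1) → Fin n,
      x i * (if idx 0 = i then adjEntry (m+1) E idx * ∏ j ∈ Finset.univ.erase 0, x (idx j) else 0)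
      = ∑ e ∈ E, if idx 0 = i ∧ idxMultiset idx = e.val
          then (1 / ((Nat.factorial m : ℝ))) * ∏ v ∈ e, x v else 0 := by
    intro idx
    by_cases h0 : idx 0 = i
    · rw [if_pos h0, adjEntry, Finset.sum_mul, Finset.mul_sum]
      refine Finset.sum_congr rfl fun e he => ?_
      rw [hcard e he]
      simp only [lt_irrefl, false_and, if_false, true_and, Nat.add_sub_cancel]
      by_cases hM : idxMultiset idx = e.val
      · rw [if_pos hM, if_pos (show idx 0 = i ∧ idxMultiset idx = e.val from ⟨h0, hM⟩)]
        have h1 : x i * ∏ j ∈ Finset.univ.erase 0, x (idx j) = ∏ j, x (idx j) := by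
          rw [← h0]
          exact Finset.mul_prod_erase (Finset.univ : Finset (Fin (m+1))) (fun j => x (idx j)) (Finset.mem_univ 0)
        rw [show x i * (1 / (Nat.factorial m : ℝ) * ∏ j ∈ Finset.univ.erase 0, x (idx j))
            = 1 / (Nat.factorial m : ℝ) * (x i * ∏ j ∈ Finset.univ.erase 0, x (idx j)) by ring,
          h1, prod_eq_of_idxMultiset hM]
      · rw [if_neg hM, if_neg (show ¬(idx 0 = i ∧ idxMultiset idx = e.val) from fun h => hM h.2)]
        ring
    · rw [if_neg h0, mul_zero]
      rw [Finset.sum_congr rfl fun e he => if_neg (by tauto)]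
      simp
  rw [tApply, Finset.mul_sum, Finset.sum_congr rfl fun idx _ => key idx, Finset.sum_comm]
  have step : ∀ e ∈ E, (∑ idx : Fin (m+1) → Fin n,
      if idx 0 = i ∧ idxMultiset idx = e.val then (1 / ((Nat.factorial m : ℝ))) * ∏ v ∈ e, x v else 0)
      = if i ∈ e then ∏ v ∈ e, x v else 0 := by
    intro e he
    rw [← Finset.sum_filter, Finset.sum_const, nsmul_eq_mul]
    by_cases hi : i ∈ e
    · rw [Tcount e (hcard e he) i hi, if_pos hi]
      have hm : (Nat.factorial m : ℝ) ≠ 0 := Nat.cast_ne_zero.mpr (Nat.factorial_ne_zero m)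
      field_simp
    · have hempty : Finset.univ.filter (fun idx : Fin (m+1) → Fin n =>
          idx 0 = i ∧ idxMultiset idx = e.val) = ∅ := by
        rw [Finset.filter_eq_empty_iff]
        rintro idx _ ⟨h0, hM⟩
        exact hi (h0 ▸ mem_of_idxMultiset hM 0)
      rw [hempty, if_neg hi]
      simp
  rw [Finset.sum_congr rfl step, Finset.sum_filter]

/-- for a connected `k`-uniform hypergraph with positive Perron vector,
`ρ(A_H) ≤ max_{e ∈ E(H)} (∏_{v∈e} d_v)^{1/k}`. -/
theorem stmt7 {n k : ℕ} [NeZero k] (E : Finset (Finset (Fin n)))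
    (hunif : ∀ e ∈ E, e.card = k) (hconn : Conn E) (hrank : HasRank E k)
    (x : Fin n → ℝ) (hx : ∀ i, 0 < x i)
    (heig : ∀ i, tApply k (adjEntry k E) x i = specRad k (adjEntry k E) * x i ^ (k - 1)) :
    ∃ e ∈ E, specRad k (adjEntry k E) ≤ (∏ v ∈ e, (deg E v : ℝ)) ^ (1 / (k : ℝ)) := by
  obtain ⟨m, hm⟩ := Nat.exists_eq_succ_of_ne_zero (NeZero.ne k)
  subst hm
  set ρ := specRad (m+1) (adjEntry (m+1) E) with hρdef
  have hkey : ∀ i, ρ * x i ^ (m+1) = ∑ e ∈ E.filter (fun e => i ∈ e), ∏ v ∈ e, x v := by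
    intro i
    rw [← lemA E hunif x i, heig i, Nat.succ_sub_one]
    ring
  obtain ⟨e0, he0, _⟩ := hrank.2
  obtain ⟨estar, hestar, hmax⟩ := Finset.exists_max_image E (fun e => ∏ v ∈ e, x v) ⟨e0, he0⟩
  refine ⟨estar, hestar, ?_⟩
  by_cases hρ : ρ ≤ 0
  · exact le_trans hρ (Real.rpow_nonneg (Finset.prod_nonneg fun v _ => Nat.cast_nonneg _) _)
  push_neg at hρ
  set P := ∏ v ∈ estar, x v with hP
  have hPpos : 0 < P := Finset.prod_pos fun v _ => hx v
  have hbound : ∀ i ∈ estar, ρ * x i ^ (m+1) ≤ (deg E i : ℝ) * P := by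
    intro i hi
    rw [hkey i]
    have h2 := Finset.sum_le_card_nsmul (E.filter (fun e => i ∈ e)) (fun e => ∏ v ∈ e, x v) P
      (fun e he => hmax e (Finset.mem_filter.mp he).1)
    simpa [deg, nsmul_eq_mul] using h2
  have hprodle : ∏ i ∈ estar, (ρ * x i ^ (m+1)) ≤ ∏ i ∈ estar, ((deg E i : ℝ) * P) :=
    Finset.prod_le_prod (fun i _ => mul_nonneg hρ.le (pow_nonneg (hx i).le _)) hbound
  rw [Finset.prod_mul_distrib, Finset.prod_mul_distrib, Finset.prod_const, Finset.prod_const,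
    Finset.prod_pow, hunif estar hestar] at hprodle
  have hk : ρ ^ (m+1) ≤ ∏ v ∈ estar, (deg E v : ℝ) :=
    le_of_mul_le_mul_right hprodle (pow_pos hPpos (m+1))
  calc ρ = (ρ ^ (m+1)) ^ (1 / ((m+1:ℕ):ℝ)) := by
        rw [← Real.rpow_natCast ρ (m+1), ← Real.rpow_mul hρ.le,
          mul_one_div, div_self (by exact_mod_cast Nat.succ_ne_zero m), Real.rpow_one]
    _ ≤ _ := Real.rpow_le_rpow (pow_nonneg hρ.le _) hk (by positivity)
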